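/- Let G be a finite abelian group of exponent N, and let m be a positive integer with m ≥ N·(1 + ln(|G|/N)), where ln denotes the natural logarithm (taken in the real numbers). Then every sequence (g_k), k = 1, ..., m, of m elements of G contains a nonempty subset K of {1, ..., m} such that ∑_{k ∈ K} g_k = 0_G. -/

import Mathlib

/-
Proof of the van Emde Boas–Kruyswijk theorem.

Strategy: work multiplicatively in `H = Multiplicative G`. If the sequence is
zero-sum free, then for EVERY assignment of nonzero complex values `x i`, there
exists a character `φ : H →* ℂˣ` with `φ (a i) ≠ x i` for all `i` (because
`∑_φ ∏_i (x i - φ (a i)) = card(Ĥ) * ∏ x i ≠ 0` by orthogonality and zero-sum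
freeness). A greedy covering of the character group shrinks the "uncovered" set
both by the factor `(1 - 1/n)` and by at least `1` per sequence element, which
yields `m ≤ n - 1 + n log (λ/n) < n (1 + log (λ/n))`.
-/

open Finset

namespace EBK

variable {H : Type*} [CommGroup H] [Fintype H]

private lemma sum_char_apply_eq_zero [Fintype (H →* ℂˣ)]
    [HasEnoughRootsOfUnity ℂ (Monoid.exponent H)] {h : H} (hh : h ≠ 1) :
    ∑ φ : H →* ℂˣ, ((φ h : ℂˣ) : ℂ) = 0 := by
  obtain ⟨φ₀, hφ₀⟩ := CommGroup.exists_apply_ne_one_of_hasEnoughRootsOfUnity H ℂ hh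
  have hre : ∑ φ : H →* ℂˣ, (((φ₀ * φ) h : ℂˣ) : ℂ) = ∑ φ : H →* ℂˣ, ((φ h : ℂˣ) : ℂ) :=
    Fintype.sum_equiv (Equiv.mulLeft φ₀) _ _ (fun φ => rfl)
  have hsplit : ∀ φ : H →* ℂˣ, (((φ₀ * φ) h : ℂˣ) : ℂ)
      = ((φ₀ h : ℂˣ) : ℂ) * ((φ h : ℂˣ) : ℂ) := fun φ => by
    simp [MonoidHom.mul_apply]
  rw [Finset.sum_congr rfl (fun φ _ => hsplit φ), ← Finset.mul_sum] at hre
  have hne : ((φ₀ h : ℂˣ) : ℂ) ≠ 1 := by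
    intro h1
    exact hφ₀ (Units.ext (by simpa using h1))
  have : (((φ₀ h : ℂˣ) : ℂ) - 1) * ∑ φ : H →* ℂˣ, ((φ h : ℂˣ) : ℂ) = 0 := by
    linear_combination hre
  rcases mul_eq_zero.mp this with h0 | h0
  · exact absurd (by linear_combination h0) hne
  · exact h0

private lemma exists_char_avoiding [Fintype (H →* ℂˣ)]
    [HasEnoughRootsOfUnity ℂ (Monoid.exponent H)]
    {m : ℕ} (a : Fin m → H) (hzs : ∀ K : Finset (Fin m), K.Nonempty → ∏ k ∈ K, a k ≠ 1)
    (x : Fin m → ℂ) (hx : ∀ j, x j ≠ 0) :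
    ∃ φ : H →* ℂˣ, ∀ j, ((φ (a j) : ℂˣ) : ℂ) ≠ x j := by
  haveI : Nonempty (H →* ℂˣ) := ⟨1⟩
  by_contra hcon
  push_neg at hcon
  classical
  have key : ∀ φ : H →* ℂˣ, ∏ j, (-((φ (a j) : ℂˣ) : ℂ) + x j)
      = ∑ t : Finset (Fin m),
          ((-1 : ℂ) ^ t.card * ((φ (∏ j ∈ t, a j) : ℂˣ) : ℂ)) * ∏ j ∈ tᶜ, x j := by
    intro φ
    rw [Fintype.prod_add]
    refine Finset.sum_congr rfl fun t _ => ?_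
    congr 1
    calc ∏ j ∈ t, -((φ (a j) : ℂˣ) : ℂ)
        = ∏ j ∈ t, ((-1 : ℂ) * ((φ (a j) : ℂˣ) : ℂ)) := by simp
      _ = (-1 : ℂ) ^ t.card * ∏ j ∈ t, ((φ (a j) : ℂˣ) : ℂ) := by
          rw [Finset.prod_mul_distrib, Finset.prod_const]
      _ = (-1 : ℂ) ^ t.card * ((φ (∏ j ∈ t, a j) : ℂˣ) : ℂ) := by
          rw [map_prod φ]
          norm_cast
  have hT0 : ∑ φ : H →* ℂˣ, ∏ j, (-((φ (a j) : ℂˣ) : ℂ) + x j) = 0 := by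
    refine Finset.sum_eq_zero fun φ _ => ?_
    obtain ⟨j, hj⟩ := hcon φ
    refine Finset.prod_eq_zero (Finset.mem_univ j) ?_
    rw [hj]; ring
  rw [Finset.sum_congr rfl (fun φ _ => key φ), Finset.sum_comm] at hT0
  have eval : ∀ t : Finset (Fin m),
      (∑ φ : H →* ℂˣ, ((-1 : ℂ) ^ t.card * ((φ (∏ j ∈ t, a j) : ℂˣ) : ℂ)) * ∏ j ∈ tᶜ, x j)
      = ((-1 : ℂ) ^ t.card * (∑ φ : H →* ℂˣ, ((φ (∏ j ∈ t, a j) : ℂˣ) : ℂ))) * ∏ j ∈ tᶜ, x j := by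
    intro t
    rw [← Finset.sum_mul, ← Finset.mul_sum]
  rw [Finset.sum_congr rfl (fun t _ => eval t)] at hT0
  rw [Fintype.sum_eq_single (∅ : Finset (Fin m))] at hT0
  · simp only [Finset.card_empty, pow_zero, Finset.prod_empty, map_one, Units.val_one,
      Finset.sum_const, Finset.card_univ, nsmul_eq_mul, mul_one, one_mul, Finset.compl_empty] at hT0
    rcases mul_eq_zero.mp hT0 with h0 | h0
    · exact Nat.cast_ne_zero.mpr Fintype.card_ne_zero h0
    · exact (Finset.prod_ne_zero_iff.mpr fun j _ => hx j) h0
  · intro t ht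
    have : ∑ φ : H →* ℂˣ, ((φ (∏ j ∈ t, a j) : ℂˣ) : ℂ) = 0 :=
      sum_char_apply_eq_zero (hzs t (Finset.nonempty_iff_ne_empty.mpr ht))
    rw [this, mul_zero, zero_mul]



/-- Potential function for the greedy covering argument. -/
private noncomputable def potf (n lam u : ℕ) : ℝ :=
  if n ≤ u then (n : ℝ) * Real.log ((lam : ℝ) / (u : ℝ))
  else (n : ℝ) * Real.log ((lam : ℝ) / (n : ℝ)) + ((n : ℝ) - (u : ℝ))

private lemma pot_base {n lam : ℕ} (hlam : 1 ≤ lam) (hnlam : n ≤ lam) :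
    potf n lam lam = 0 := by
  rw [potf, if_pos hnlam, div_self (by exact_mod_cast Nat.one_le_iff_ne_zero.mp hlam),
    Real.log_one, mul_zero]

private lemma pot_step {n lam u u' : ℕ} (hn : 2 ≤ n) (hu' : 1 ≤ u') (hdrop : u' < u)
    (hmul : n * u' + u ≤ n * u) (hulam : u ≤ lam) :
    potf n lam u + 1 ≤ potf n lam u' := by
  have hn0 : (0 : ℝ) < n := by exact_mod_cast Nat.lt_of_lt_of_le (by norm_num) hn
  have hu'0 : (0 : ℝ) < u' := by exact_mod_cast hu'
  have hu0 : (0 : ℝ) < u := lt_trans hu'0 (by exact_mod_cast hdrop)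
  have hlam0 : (0 : ℝ) < lam := lt_of_lt_of_le hu0 (by exact_mod_cast hulam)
  have hmulR : (n : ℝ) * u' + u ≤ n * u := by exact_mod_cast hmul
  rw [potf, potf]
  rcases le_or_gt n u' with h1 | h1
  · have h2 : n ≤ u := le_trans h1 (le_of_lt hdrop)
    rw [if_pos h1, if_pos h2]
    have e1 : Real.log ((lam : ℝ) / u) = Real.log lam - Real.log u :=
      Real.log_div hlam0.ne' hu0.ne'
    have e2 : Real.log ((lam : ℝ) / u') = Real.log lam - Real.log u' :=
      Real.log_div hlam0.ne' hu'0.ne'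
    have e3 : Real.log ((u' : ℝ) / u) = Real.log u' - Real.log u :=
      Real.log_div hu'0.ne' hu0.ne'
    have hfrac : (u' : ℝ) / u ≤ ((n : ℝ) - 1) / n := by
      rw [div_le_div_iff₀ hu0 hn0]
      nlinarith
    have hlog1 : Real.log ((u' : ℝ) / u) ≤ ((n : ℝ) - 1) / n - 1 :=
      le_trans (Real.log_le_sub_one_of_pos (by positivity)) (by linarith)
    have hlog2 : Real.log u' - Real.log u ≤ -(1 / (n : ℝ)) := by
      rw [← e3]
      have : ((n : ℝ) - 1) / n - 1 = -(1 / (n : ℝ)) := by field_simp; ring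
      linarith [hlog1, this.le, this.ge]
    have hmn : (n : ℝ) * (Real.log u' - Real.log u) ≤ (n : ℝ) * (-(1 / (n : ℝ))) :=
      mul_le_mul_of_nonneg_left hlog2 hn0.le
    have : (n : ℝ) * (-(1 / (n : ℝ))) = -1 := by field_simp
    rw [e1, e2]
    nlinarith [hmn]
  · rcases le_or_gt n u with h2 | h2
    · rw [if_neg (not_le.mpr h1), if_pos h2]
      have hu'n : (u' : ℝ) + 1 ≤ (n : ℝ) := by exact_mod_cast h1
      have hdivle : (lam : ℝ) / u ≤ (lam : ℝ) / n := by
        apply div_le_div_of_nonneg_left hlam0.le hn0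
        exact_mod_cast h2
      have hlogmono : Real.log ((lam : ℝ) / u) ≤ Real.log ((lam : ℝ) / n) := by
        apply Real.log_le_log (by positivity) hdivle
      have := mul_le_mul_of_nonneg_left hlogmono hn0.le
      linarith
    · rw [if_neg (not_le.mpr h1), if_neg (not_le.mpr h2)]
      have : (u' : ℝ) + 1 ≤ (u : ℝ) := by exact_mod_cast hdrop
      linarith

private lemma pot_final {n lam u : ℕ} (hn : 1 ≤ n) (hu : 1 ≤ u) (hulam : u ≤ lam)
    (hnlam : n ≤ lam) :
    potf n lam u ≤ (n : ℝ) - 1 + (n : ℝ) * Real.log ((lam : ℝ) / (n : ℝ)) := by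
  have hn0 : (0 : ℝ) < n := by exact_mod_cast hn
  have hu0 : (0 : ℝ) < u := by exact_mod_cast hu
  have hlam0 : (0 : ℝ) < lam := lt_of_lt_of_le hu0 (by exact_mod_cast hulam)
  rw [potf]
  split_ifs with h
  · have hnu : (n : ℝ) ≤ u := by exact_mod_cast h
    have hdivle : (lam : ℝ) / u ≤ (lam : ℝ) / n :=
      div_le_div_of_nonneg_left hlam0.le hn0 hnu
    have hlogmono : Real.log ((lam : ℝ) / u) ≤ Real.log ((lam : ℝ) / n) :=
      Real.log_le_log (by positivity) hdivle
    have hn1 : (1 : ℝ) ≤ n := by exact_mod_cast hn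
    have := mul_le_mul_of_nonneg_left hlogmono hn0.le
    linarith
  · have h1u : (1 : ℝ) ≤ u := by exact_mod_cast hu
    have hlog0 : 0 ≤ Real.log ((lam : ℝ) / n) := by
      apply Real.log_nonneg
      rw [le_div_iff₀ hn0]
      simpa using (by exact_mod_cast hnlam : (n : ℝ) ≤ lam)
    nlinarith


/-- Main length bound: a zero-product-free sequence over a finite abelian group `H`
with exponent `n` and order `lam` has length at most `n - 1 + n log (lam/n)`. -/
lemma length_bound {H : Type*} [CommGroup H] [Fintype H] {m : ℕ}
    (a : Fin m → H) (hzs : ∀ K : Finset (Fin m), K.Nonempty → ∏ k ∈ K, a k ≠ 1) :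
    (m : ℝ) ≤ (Monoid.exponent H : ℝ) - 1
      + (Monoid.exponent H : ℝ) *
        Real.log ((Fintype.card H : ℝ) / (Monoid.exponent H : ℝ)) := by
  classical
  set n := Monoid.exponent H with hn_def
  set lam := Fintype.card H with hlam_def
  -- basic facts
  have hlampos : 0 < lam := Fintype.card_pos
  have hdvd : n ∣ lam :=
    Monoid.exponent_dvd_of_forall_pow_eq_one (fun g => pow_card_eq_one)
  have hnpos : 0 < n := by
    rcases Nat.eq_zero_or_pos n with h0 | h
    · exact absurd (h0 ▸ hdvd) (by simpa using hlampos.ne')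
    · exact h
  have hnlam : n ≤ lam := Nat.le_of_dvd hlampos hdvd
  -- roots of unity instance
  haveI : NeZero ((n : ℕ) : ℂ) := ⟨Nat.cast_ne_zero.mpr hnpos.ne'⟩
  haveI hroots : HasEnoughRootsOfUnity ℂ (Monoid.exponent H) :=
    IsSepClosed.hasEnoughRootsOfUnity ℂ n
  -- character group
  obtain ⟨e⟩ := CommGroup.monoidHom_mulEquiv_of_hasEnoughRootsOfUnity H ℂ
  letI : Fintype (H →* ℂˣ) := Fintype.ofEquiv H e.symm.toEquiv
  have hcardX : Fintype.card (H →* ℂˣ) = lam := Fintype.card_congr e.toEquiv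
  -- trivial case m = 0
  rcases Nat.eq_zero_or_pos m with hm0 | hmpos
  · subst hm0
    have hlog0 : 0 ≤ Real.log ((lam : ℝ) / n) := by
      apply Real.log_nonneg
      rw [le_div_iff₀ (by exact_mod_cast hnpos)]
      simpa using (by exact_mod_cast hnlam : (n : ℝ) ≤ lam)
    have hn1 : (1 : ℝ) ≤ n := by exact_mod_cast hnpos
    simp only [Nat.cast_zero]
    nlinarith
  -- n ≥ 2
  have ha0 : a ⟨0, hmpos⟩ ≠ 1 := by
    have := hzs {⟨0, hmpos⟩} ⟨_, Finset.mem_singleton_self _⟩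
    simpa using this
  have hn2 : 2 ≤ n := by
    have h2 : 2 ≤ orderOf (a ⟨0, hmpos⟩) := by
      have hpos : 0 < orderOf (a ⟨0, hmpos⟩) := orderOf_pos _
      have hne1 : orderOf (a ⟨0, hmpos⟩) ≠ 1 := by
        simpa [orderOf_eq_one_iff] using ha0
      omega
    exact le_trans h2 (Nat.le_of_dvd hnpos (Monoid.order_dvd_exponent _))
  -- greedy induction
  have greedy : ∀ i : ℕ, i ≤ m → ∃ (U : Finset (H →* ℂˣ)) (x : Fin m → ℂ),
      (∀ j, x j ≠ 0) ∧
      (∀ φ : H →* ℂˣ, φ ∉ U → ∃ j : Fin m, (j : ℕ) < i ∧ ((φ (a j) : ℂˣ) : ℂ) = x j) ∧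
      U.Nonempty ∧ (i : ℝ) ≤ potf n lam U.card := by
    intro i
    induction i with
    | zero =>
      intro _
      refine ⟨Finset.univ, fun _ => 1, fun _ => one_ne_zero, ?_, ⟨1, Finset.mem_univ 1⟩, ?_⟩
      · intro φ hφ; exact absurd (Finset.mem_univ φ) hφ
      · rw [Finset.card_univ, hcardX, pot_base hlampos hnlam]
        norm_num
    | succ i ih =>
      intro him
      obtain ⟨U, x, hx0, hcov, hUne, hpot⟩ := ih (Nat.le_of_succ_le him)
      have him' : i < m := him
      set j : Fin m := ⟨i, him'⟩ with hj_def
      set c : (H →* ℂˣ) → ℂ := fun φ => ((φ (a j) : ℂˣ) : ℂ) with hc_def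
      have hV : (U.image c).Nonempty := hUne.image c
      obtain ⟨v, hvmem, hvmax⟩ :=
        Finset.exists_max_image (U.image c) (fun w => (U.filter fun φ => c φ = w).card) hV
      obtain ⟨ψ, hψU, hψv⟩ := Finset.mem_image.mp hvmem
      have hv0 : v ≠ 0 := by rw [← hψv]; exact Units.ne_zero _
      set Fib := U.filter fun φ => c φ = v with hFib_def
      set U' := U.filter fun φ => ¬ (c φ = v) with hU'_def
      set x' := Function.update x j v with hx'_def
      have hx0' : ∀ k, x' k ≠ 0 := by
        intro k
        by_cases hk : k = j
        · subst hk; simpa [hx'_def, Function.update_self] using hv0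
        · simpa [hx'_def, Function.update_of_ne hk] using hx0 k
      have hcov' : ∀ φ : H →* ℂˣ, φ ∉ U' →
          ∃ k : Fin m, (k : ℕ) < i + 1 ∧ ((φ (a k) : ℂˣ) : ℂ) = x' k := by
        intro φ hφ
        by_cases hφU : φ ∈ U
        · have hval : c φ = v := by
            by_contra hne
            exact hφ (Finset.mem_filter.mpr ⟨hφU, hne⟩)
          refine ⟨j, by simp [hj_def], ?_⟩
          rw [hx'_def, Function.update_self]
          exact hval
        · obtain ⟨k, hk, hkx⟩ := hcov φ hφU
          have hkj : k ≠ j := by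
            intro h
            rw [h] at hk
            simp [hj_def] at hk
          exact ⟨k, by omega, by rw [hx'_def, Function.update_of_ne hkj]; exact hkx⟩
      obtain ⟨φs, hφs⟩ := exists_char_avoiding a hzs x' hx0'
      have hφsU' : φs ∈ U' := by
        by_contra hnot
        obtain ⟨k, _, hk⟩ := hcov' φs hnot
        exact hφs k hk
      -- cardinalities
      have hfib1 : 1 ≤ Fib.card :=
        Finset.card_pos.mpr ⟨ψ, Finset.mem_filter.mpr ⟨hψU, hψv⟩⟩
      have hsplit : Fib.card + U'.card = U.card := by
        rw [hFib_def, hU'_def]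
        exact Finset.card_filter_add_card_filter_not _
      have himage : (U.image c).card ≤ n := by
        have hsub : U.image c ⊆ (Polynomial.nthRoots n (1 : ℂ)).toFinset := by
          intro w hw
          obtain ⟨φ, _, hφw⟩ := Finset.mem_image.mp hw
          rw [Multiset.mem_toFinset, Polynomial.mem_nthRoots hnpos, ← hφw]
          rw [hc_def]
          have : (a j) ^ n = 1 := Monoid.pow_exponent_eq_one (a j)
          calc ((φ (a j) : ℂˣ) : ℂ) ^ n = ((φ ((a j) ^ n) : ℂˣ) : ℂ) := by
                rw [map_pow]; norm_cast
            _ = 1 := by rw [this, map_one, Units.val_one]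
        calc (U.image c).card ≤ (Polynomial.nthRoots n (1 : ℂ)).toFinset.card :=
              Finset.card_le_card hsub
          _ ≤ Multiset.card (Polynomial.nthRoots n (1 : ℂ)) := Multiset.toFinset_card_le _
          _ ≤ n := Polynomial.card_nthRoots n 1
      have hUbound : U.card ≤ n * Fib.card := by
        have hmaps : ∀ φ ∈ U, c φ ∈ U.image c := fun φ hφ => Finset.mem_image_of_mem c hφ
        rw [Finset.card_eq_sum_card_fiberwise hmaps]
        calc ∑ w ∈ U.image c, (U.filter fun φ => c φ = w).card
            ≤ (U.image c).card • Fib.card :=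
              Finset.sum_le_card_nsmul _ _ _ (fun w hw => hvmax w hw)
          _ = (U.image c).card * Fib.card := by rw [smul_eq_mul]
          _ ≤ n * Fib.card := Nat.mul_le_mul_right _ himage
      have hU'1 : 1 ≤ U'.card := Finset.card_pos.mpr ⟨φs, hφsU'⟩
      have hdrop : U'.card < U.card := by omega
      have hmul : n * U'.card + U.card ≤ n * U.card := by
        calc n * U'.card + U.card ≤ n * U'.card + n * Fib.card := by omega
          _ = n * (U'.card + Fib.card) := (Nat.mul_add n _ _).symm
          _ = n * U.card := by rw [Nat.add_comm, hsplit]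
      have hUlam : U.card ≤ lam := by
        rw [← hcardX]
        exact Finset.card_le_univ U
      refine ⟨U', x', hx0', hcov', ⟨φs, hφsU'⟩, ?_⟩
      have hstep := pot_step hn2 hU'1 hdrop hmul hUlam
      push_cast
      linarith
  -- conclude
  obtain ⟨U, x, _, _, hUne, hpot⟩ := greedy m le_rfl
  have h1U : 1 ≤ U.card := Finset.card_pos.mpr hUne
  have hUlam : U.card ≤ lam := by
    rw [← hcardX]; exact Finset.card_le_univ U
  have hfin := pot_final hnpos h1U hUlam hnlam
  linarith

end EBK

/-- van Emde Boas–Kruyswijk: any sequence of at least N(1 + ln(|G|/N)) elements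
of a finite abelian group G of exponent N contains a nonempty zero-sum
subsequence. -/
theorem zero_sum_of_length_ge_EBK (G : Type*) [AddCommGroup G] [Fintype G]
    (m : ℕ) (hm : 0 < m)
    (hlen : (m : ℝ) ≥ (AddMonoid.exponent G : ℝ) *
      (1 + Real.log ((Fintype.card G : ℝ) / (AddMonoid.exponent G : ℝ))))
    (g : Fin m → G) :
    ∃ K : Finset (Fin m), K.Nonempty ∧ ∑ k ∈ K, g k = 0 := by
  by_contra hcon
  push_neg at hcon
  have hzs : ∀ K : Finset (Fin m), K.Nonempty →
      ∏ k ∈ K, (Multiplicative.ofAdd (g k)) ≠ 1 := by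
    intro K hK h1
    refine hcon K hK ?_
    have : Multiplicative.ofAdd (∑ k ∈ K, g k) = 1 := by rw [ofAdd_sum]; exact h1
    exact ofAdd_eq_one.mp this
  have hb := EBK.length_bound (H := Multiplicative G)
    (fun k => Multiplicative.ofAdd (g k)) hzs
  rw [Monoid.exponent_multiplicative, Fintype.card_multiplicative] at hb
  have hb' := hb
  have hNpos : 0 < AddMonoid.exponent G := by
    have hdvd : AddMonoid.exponent G ∣ Fintype.card G :=
      AddMonoid.exponent_dvd_of_forall_nsmul_eq_zero (fun g => card_nsmul_eq_zero)
    rcases Nat.eq_zero_or_pos (AddMonoid.exponent G) with h0 | h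
    · exact absurd (h0 ▸ hdvd) (by simpa using Fintype.card_pos.ne')
    · exact h
  have hN1 : (1 : ℝ) ≤ (AddMonoid.exponent G : ℝ) := by exact_mod_cast hNpos
  rw [mul_add, mul_one] at hlen
  linarith [hb']
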